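/- Consider the map F : ℝ² × ℝ² × ℝ² → ℝ given by F(e, p_j, p_k) = A(e, p_j, p_k). The (Fréchet) derivative of F vanishes at the point (e, p_j, p_k) if and only if e = p_j = p_k. (This is the gradient nonvanishing property used in Proposition 2 to show that each switching surface {A_jk = 0} is a smooth hypersurface whenever the three points are not all equal.) -/
import Mathlib


noncomputable section

/-- Signed area `A(a,b,c) = ½·[a₁(b₂−c₂) + b₁(c₂−a₂) + c₁(a₂−b₂)]`. -/
def sarea (a b c : EuclideanSpace ℝ (Fin 2)) : ℝ :=
  (1/2) * (a 0 * (b 1 - c 1) + b 0 * (c 1 - a 1) + c 0 * (a 1 - b 1))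

local notation "E" => EuclideanSpace ℝ (Fin 2)

/-- The Fréchet derivative of `F(e, p_j, p_k) = A(e, p_j, p_k)` vanishes at `(e, p_j, p_k)`
iff `e = p_j = p_k`. -/
theorem stmt_16 (x : EuclideanSpace ℝ (Fin 2) × EuclideanSpace ℝ (Fin 2) ×
    EuclideanSpace ℝ (Fin 2)) :
    fderiv ℝ (fun y : EuclideanSpace ℝ (Fin 2) × EuclideanSpace ℝ (Fin 2) ×
        EuclideanSpace ℝ (Fin 2) => sarea y.1 y.2.1 y.2.2) x = 0 ↔
      x.1 = x.2.1 ∧ x.2.1 = x.2.2 := by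
  classical
  set A0 : (E × E × E) →L[ℝ] ℝ :=
    (EuclideanSpace.proj (0 : Fin 2)).comp (ContinuousLinearMap.fst ℝ E (E × E)) with hA0def
  set A1 : (E × E × E) →L[ℝ] ℝ :=
    (EuclideanSpace.proj (1 : Fin 2)).comp (ContinuousLinearMap.fst ℝ E (E × E)) with hA1def
  set B0 : (E × E × E) →L[ℝ] ℝ :=
    ((EuclideanSpace.proj (0 : Fin 2)).comp (ContinuousLinearMap.fst ℝ E E)).comp
      (ContinuousLinearMap.snd ℝ E (E × E)) with hB0def
  set B1 : (E × E × E) →L[ℝ] ℝ :=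
    ((EuclideanSpace.proj (1 : Fin 2)).comp (ContinuousLinearMap.fst ℝ E E)).comp
      (ContinuousLinearMap.snd ℝ E (E × E)) with hB1def
  set C0 : (E × E × E) →L[ℝ] ℝ :=
    ((EuclideanSpace.proj (0 : Fin 2)).comp (ContinuousLinearMap.snd ℝ E E)).comp
      (ContinuousLinearMap.snd ℝ E (E × E)) with hC0def
  set C1 : (E × E × E) →L[ℝ] ℝ :=
    ((EuclideanSpace.proj (1 : Fin 2)).comp (ContinuousLinearMap.snd ℝ E E)).comp
      (ContinuousLinearMap.snd ℝ E (E × E)) with hC1def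
  have hA0 : HasFDerivAt (fun y : E × E × E => y.1 0) A0 x := A0.hasFDerivAt
  have hA1 : HasFDerivAt (fun y : E × E × E => y.1 1) A1 x := A1.hasFDerivAt
  have hB0 : HasFDerivAt (fun y : E × E × E => y.2.1 0) B0 x := B0.hasFDerivAt
  have hB1 : HasFDerivAt (fun y : E × E × E => y.2.1 1) B1 x := B1.hasFDerivAt
  have hC0 : HasFDerivAt (fun y : E × E × E => y.2.2 0) C0 x := C0.hasFDerivAt
  have hC1 : HasFDerivAt (fun y : E × E × E => y.2.2 1) C1 x := C1.hasFDerivAt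
  set D : (E × E × E) →L[ℝ] ℝ :=
    ((1:ℝ)/2) • ((x.1 0 • (B1 - C1) + (x.2.1 1 - x.2.2 1) • A0) +
      (x.2.1 0 • (C1 - A1) + (x.2.2 1 - x.1 1) • B0) +
      (x.2.2 0 • (A1 - B1) + (x.1 1 - x.2.1 1) • C0)) with hDdef
  have hder : HasFDerivAt (fun y : E × E × E => sarea y.1 y.2.1 y.2.2) D x := by
    have h := (((hA0.mul (hB1.sub hC1)).add (hB0.mul (hC1.sub hA1))).add
      (hC0.mul (hA1.sub hB1))).const_mul ((1:ℝ)/2)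
    exact h
  rw [hder.fderiv]
  have hp : ∀ (i : Fin 2) (v : E), EuclideanSpace.proj i v = v i := fun _ _ => rfl
  constructor
  · intro h0
    have key : ∀ v : E × E × E, D v = 0 := fun v => by rw [h0]; rfl
    have e1 := key (EuclideanSpace.single 0 1, 0, 0)
    have e2 := key ((EuclideanSpace.single 1 1 : E), 0, 0)
    have e3 := key (0, (EuclideanSpace.single 0 1 : E), 0)
    have e4 := key (0, (EuclideanSpace.single 1 1 : E), 0)
    have e5 := key (0, 0, (EuclideanSpace.single 0 1 : E))
    have e6 := key (0, 0, (EuclideanSpace.single 1 1 : E))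
    simp only [hDdef, hA0def, hA1def, hB0def, hB1def, hC0def, hC1def,
      ContinuousLinearMap.smul_apply, ContinuousLinearMap.add_apply,
      ContinuousLinearMap.sub_apply, ContinuousLinearMap.comp_apply,
      ContinuousLinearMap.coe_fst', ContinuousLinearMap.coe_snd', hp,
      EuclideanSpace.single_apply, smul_eq_mul, map_zero,
      ContinuousLinearMap.zero_apply] at e1 e2 e3 e4 e5 e6
    norm_num at e1 e2 e3 e4 e5 e6
    constructor
    · ext i
      fin_cases i
      · show x.1 0 = x.2.1 0; linarith
      · show x.1 1 = x.2.1 1; linarith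
    · ext i
      fin_cases i
      · show x.2.1 0 = x.2.2 0; linarith
      · show x.2.1 1 = x.2.2 1; linarith
  · rintro ⟨h1, h2⟩
    refine ContinuousLinearMap.ext fun v => ?_
    simp only [hDdef, hA0def, hA1def, hB0def, hB1def, hC0def, hC1def,
      ContinuousLinearMap.smul_apply, ContinuousLinearMap.add_apply,
      ContinuousLinearMap.sub_apply, ContinuousLinearMap.comp_apply,
      ContinuousLinearMap.coe_fst', ContinuousLinearMap.coe_snd', hp,
      smul_eq_mul, ContinuousLinearMap.zero_apply]
    rw [h1, h2]
    ring

end
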